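/- Let G be a finite group whose commutator subgroup [G,G] is cyclic, and suppose G is generated by two elements a and b. Then [G,G] is generated by the single commutator [a,b]. -/

import Mathlib

/-- In a finite cyclic group, any element killed by `orderOf x` lies in `zpowers x`. -/
lemma aux_mem_zpowers_of_pow_eq_one {C : Type*} [Group C] [Finite C] (h : IsCyclic C)
    (x y : C) (hy : y ^ orderOf x = 1) : y ∈ Subgroup.zpowers x := by
  classical
  haveI := Fintype.ofFinite C
  haveI := h
  have hx : 0 < orderOf x := orderOf_pos x
  have hcard2 := IsCyclic.card_pow_eq_one_le (α := C) hx
  have hsub : (Subgroup.zpowers x : Set C).toFinset ⊆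
      Finset.univ.filter (fun a : C => a ^ orderOf x = 1) := by
    intro z hz
    simp only [Set.mem_toFinset, SetLike.mem_coe, Subgroup.mem_zpowers_iff] at hz
    obtain ⟨k, rfl⟩ := hz
    simp only [Finset.mem_filter, Finset.mem_univ, true_and]
    rw [← zpow_natCast, ← zpow_mul, mul_comm, zpow_mul, zpow_natCast, pow_orderOf_eq_one,
      one_zpow]
  have hcardz : (Subgroup.zpowers x : Set C).toFinset.card = orderOf x := by
    rw [Set.toFinset_card]
    simpa using Fintype.card_zpowers (x := x)
  have heq := Finset.eq_of_subset_of_card_le hsub (by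
    rw [hcardz]
    simpa using hcard2)
  have : y ∈ Finset.univ.filter (fun a : C => a ^ orderOf x = 1) := by
    simp [hy]
  rw [← heq, Set.mem_toFinset] at this
  exact this

open scoped commutatorElement

/-- If `G` is a finite group with cyclic commutator subgroup, generated by two
elements `a` and `b`, then the commutator subgroup is generated by `[a,b] = a⁻¹b⁻¹ab`. -/
theorem stmt_0 {G : Type*} [Group G] [Finite G]
    (hcyc : IsCyclic (commutator G)) (a b : G)
    (hgen : Subgroup.closure ({a, b} : Set G) = ⊤) :
    commutator G = Subgroup.closure {a⁻¹ * b⁻¹ * a * b} := by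
  set c : G := a⁻¹ * b⁻¹ * a * b with hc_def
  have hc : c ∈ commutator G := by
    have hce : c = ⁅a⁻¹, b⁻¹⁆ := by
      simp [hc_def, commutatorElement_def]
    rw [hce]
    exact Subgroup.commutator_mem_commutator (Subgroup.mem_top _) (Subgroup.mem_top _)
  set c' : commutator G := ⟨c, hc⟩ with hc'_def
  set K : Subgroup G := Subgroup.closure {c} with hK_def
  -- K is the image of zpowers c' under the inclusion
  have hKmap : (Subgroup.zpowers c').map (commutator G).subtype = K := by
    rw [MonoidHom.map_zpowers, hK_def, Subgroup.zpowers_eq_closure]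
    rfl
  have hKle : K ≤ commutator G := by
    rw [hK_def, Subgroup.closure_le, Set.singleton_subset_iff]
    exact hc
  -- K is normal in G
  have hKnormal : K.Normal := by
    constructor
    intro n hn g
    rw [← hKmap] at hn ⊢
    obtain ⟨m, hm, rfl⟩ := hn
    obtain ⟨k, rfl⟩ := hm
    -- the conjugation automorphism of the commutator subgroup
    have hN : (commutator G).Normal := Subgroup.commutator_normal ⊤ ⊤
    let φ : MulAut (commutator G) := @MulAut.conjNormal G _ (commutator G) hN g
    have hord : orderOf (φ c') = orderOf c' := φ.orderOf_eq c'
    have hmem : φ c' ∈ Subgroup.zpowers c' := by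
      apply aux_mem_zpowers_of_pow_eq_one hcyc
      rw [← hord, pow_orderOf_eq_one]
    -- now g * c'^k * g⁻¹ = (φ c')^k ∈ zpowers c'
    refine ⟨(φ c') ^ k, (Subgroup.zpowers c').zpow_mem hmem k, ?_⟩
    have hφ : ((φ c' : commutator G) : G) = g * c * g⁻¹ := by
      simp [φ, hc'_def]
    show ((φ c' ^ k : commutator G) : G) = g * ((c' ^ k : commutator G) : G) * g⁻¹
    rw [SubgroupClass.coe_zpow, SubgroupClass.coe_zpow, hφ, conj_zpow]
  -- the quotient by K
  haveI := hKnormal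
  have hle : commutator G ≤ K := by
    let π : G →* G ⧸ K := QuotientGroup.mk' K
    have hπsurj : Function.Surjective π := QuotientGroup.mk'_surjective K
    -- images of a and b commute
    have hcomm : π a * π b = π b * π a := by
      have h1 : π c = 1 := by
        rw [QuotientGroup.mk'_apply, QuotientGroup.eq_one_iff]
        exact Subgroup.subset_closure rfl
      have h2 : (π a)⁻¹ * (π b)⁻¹ * π a * π b = 1 := by
        simpa [map_mul, hc_def] using h1
      have h3 := congrArg (fun z => π b * (π a * z)) h2
      simpa [mul_assoc] using h3
    -- the quotient is commutative
    have hQcomm : ∀ x y : G ⧸ K, x * y = y * x := by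
      have hgenQ : Subgroup.closure ({π a, π b} : Set (G ⧸ K)) = ⊤ := by
        have := Subgroup.map_top_of_surjective π hπsurj
        rw [← hgen, MonoidHom.map_closure] at this
        rw [← this, Set.image_insert_eq, Set.image_singleton]
      have hpair : ∀ x ∈ ({π a, π b} : Set (G ⧸ K)), ∀ y ∈ ({π a, π b} : Set (G ⧸ K)),
          x * y = y * x := by
        rintro x (rfl | rfl) y (rfl | rfl) <;> simp_all
      intro x y
      have hx : x ∈ Subgroup.closure ({π a, π b} : Set (G ⧸ K)) := by rw [hgenQ]; trivial
      have hy : y ∈ Subgroup.closure ({π a, π b} : Set (G ⧸ K)) := by rw [hgenQ]; trivial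
      have h1 := Subgroup.closure_le_centralizer_centralizer ({π a, π b} : Set (G ⧸ K))
      exact Set.centralizer_centralizer_comm_of_comm hpair x (h1 hx) y (h1 hy)
    -- hence the commutator subgroup maps to 1
    rw [commutator_def, Subgroup.commutator_le]
    intro g1 _ g2 _
    have hone : π ⁅g1, g2⁆ = 1 := by
      rw [map_commutatorElement]
      exact commutatorElement_eq_one_iff_mul_comm.mpr (hQcomm _ _)
    rwa [QuotientGroup.mk'_apply, QuotientGroup.eq_one_iff] at hone
  exact le_antisymm hle hKle
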